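/- Let G be a finite solvable group such that every element g ∈ G has a right Engel sink of cardinality at most m. Then there is a nilpotent normal subgroup N of G such that the exponent of G/N divides m! (equivalently, the exponent of the quotient of G by its Fitting subgroup divides m!). -/

import Mathlib

/-- The commutator `[a,b] = a⁻¹ b⁻¹ a b`. -/
def cmtr {G : Type*} [Group G] (a b : G) : G := a⁻¹ * b⁻¹ * a * b

/-- `engel a b n` is the left-normed Engel commutator `[a,_n b] = [[...[[a,b],b],...],b]`
with `b` repeated `n` times. -/
def engel {G : Type*} [Group G] (a b : G) : ℕ → G
  | 0 => a
  | n + 1 => cmtr (engel a b n) b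

/-- A finite subset `R` of `G` is a right Engel sink for `g` if for every `x ∈ G` there is a
positive integer `n₀` such that `[g,_n x] ∈ R` for all `n ≥ n₀`. -/
def IsRightEngelSink {G : Type*} [Group G] (g : G) (R : Set G) : Prop :=
  R.Finite ∧ ∀ x : G, ∃ n₀ : ℕ, 0 < n₀ ∧ ∀ n ≥ n₀, engel g x n ∈ R

/-- A finite subset `E` of `G` is a left Engel sink for `g` if for every `x ∈ G` there is a
positive integer `n₀` such that `[x,_n g] ∈ E` for all `n ≥ n₀`. -/
def IsLeftEngelSink {G : Type*} [Group G] (g : G) (E : Set G) : Prop :=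
  E.Finite ∧ ∀ x : G, ∃ n₀ : ℕ, 0 < n₀ ∧ ∀ n ≥ n₀, engel x g n ∈ E

/-- An element is almost right Engel if it admits a finite right Engel sink. -/
def AlmostRightEngel {G : Type*} [Group G] (g : G) : Prop :=
  ∃ R : Set G, IsRightEngelSink g R

/-- A group is locally nilpotent if every finitely generated subgroup is nilpotent. -/
def LocallyNilpotent (G : Type*) [Group G] : Prop :=
  ∀ H : Subgroup G, H.FG → Group.IsNilpotent H

section prelim
variable {G : Type*} [Group G]

lemma cmtr_one_left (b : G) : cmtr 1 b = 1 := by simp [cmtr]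

lemma engel_self (g : G) : ∀ n, 1 ≤ n → engel g g n = 1 := by
  intro n hn
  induction n with
  | zero => omega
  | succ k ih =>
    rcases Nat.lt_or_ge k 1 with h | h
    · interval_cases k
      simp [engel, cmtr]
    · rw [engel, ih h, cmtr_one_left]

lemma engel_map {H : Type*} [Group H] (f : G →* H) (a b : G) (n : ℕ) :
    f (engel a b n) = engel (f a) (f b) n := by
  induction n with
  | zero => rfl
  | succ n ih => simp [engel, cmtr, ih]

lemma one_mem_of_sink {g : G} {R : Set G} (h : IsRightEngelSink g R) : (1 : G) ∈ R := by
  obtain ⟨n₀, hn₀, hn⟩ := h.2 g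
  have := hn n₀ le_rfl
  rwa [engel_self g n₀ hn₀] at this

lemma sink_hyp_quotient (m : ℕ)
    (h : ∀ g : G, ∃ R : Finset G, R.card ≤ m ∧ IsRightEngelSink g ↑R)
    (V : Subgroup G) [V.Normal] :
    ∀ g : G ⧸ V, ∃ R : Finset (G ⧸ V), R.card ≤ m ∧ IsRightEngelSink g ↑R := by
  classical
  intro q
  obtain ⟨g, rfl⟩ := QuotientGroup.mk_surjective q
  obtain ⟨R, hcard, _, hsink⟩ := h g
  refine ⟨R.image (QuotientGroup.mk), le_trans (Finset.card_image_le) hcard,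
    (R.image _).finite_toSet, ?_⟩
  intro x
  obtain ⟨y, rfl⟩ := QuotientGroup.mk_surjective x
  obtain ⟨n₀, h0, hmem⟩ := hsink y
  refine ⟨n₀, h0, fun n hn => ?_⟩
  have h1 := hmem n hn
  have h2 : (QuotientGroup.mk' V) (engel g y n) =
      engel ((QuotientGroup.mk' V) g) ((QuotientGroup.mk' V) y) n := engel_map _ _ _ _
  simp only [QuotientGroup.mk'_apply] at h2
  rw [← h2]
  exact Finset.mem_coe.2 (Finset.mem_image_of_mem _ h1)

end prelim

section abs
variable {A : Type*} [CommGroup A]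

/-- the endomorphism v ↦ c v / v -/
def tm (c : MulAut A) : A →* A := c.toMonoidHom / MonoidHom.id A

lemma tm_apply (c : MulAut A) (v : A) : tm c v = c v / v := rfl

/-- torsion-freeness for the order of c -/
def NTor (c : MulAut A) : Prop := ∀ v : A, v ^ orderOf c = 1 → v = 1

lemma abs_S1 {c : MulAut A} (htor : NTor c) {v : A} (hv : v ∈ (tm c).range)
    (hfix : c v = v) : v = 1 := by
  obtain ⟨u, hu⟩ := hv
  have hfixi : ∀ i : ℕ, (c ^ i) v = v := by
    intro i
    induction i with
    | zero => rfl
    | succ i ih => rw [pow_succ, MulAut.mul_apply]; rw [hfix, ih]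
  apply htor
  have h1 : ∀ i : ℕ, (c ^ (i+1)) u / (c ^ i) u = v := by
    intro i
    have : (c ^ (i+1)) u / (c ^ i) u = (c ^ i) (c u / u) := by
      rw [map_div, pow_succ, MulAut.mul_apply]
    rw [this, ← tm_apply, hu, hfixi]
  calc v ^ (orderOf c) = ∏ _i ∈ Finset.range (orderOf c), v := by
        rw [Finset.prod_const, Finset.card_range]
    _ = (c ^ (orderOf c)) u / (c ^ 0) u := by
        rw [← Finset.prod_range_div (fun i => (c ^ i) u) (orderOf c)]
        apply Finset.prod_congr rfl; intro i _; rw [h1]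
    _ = 1 := by rw [pow_orderOf_eq_one, pow_zero]; simp

lemma abs_S3 (c : MulAut A) (k : ℕ) : (tm (c ^ k)).range ≤ (tm c).range := by
  rintro v ⟨u, rfl⟩
  refine ⟨∏ i ∈ Finset.range k, (c ^ i) u, ?_⟩
  rw [tm_apply, tm_apply, map_prod, ← Finset.prod_div_distrib]
  calc ∏ i ∈ Finset.range k, c ((c ^ i) u) / (c ^ i) u
      = ∏ i ∈ Finset.range k, ((c ^ (i+1)) u / (c ^ i) u) := by
        apply Finset.prod_congr rfl; intro i _; rw [pow_succ', MulAut.mul_apply]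
    _ = (c ^ k) u / (c ^ 0) u := by
        simpa using Finset.prod_range_div (fun i => (c ^ i) u) k
    _ = (c ^ k) u / u := by rw [pow_zero]; rfl

lemma abs_inj {c : MulAut A} (htor : NTor c) {v w : A}
    (hv : v ∈ (tm c).range) (hw : w ∈ (tm c).range) (h : tm c v = tm c w) : v = w := by
  have hv' : c v = v * tm c v := by rw [tm_apply, ← mul_div_assoc, mul_div_cancel_left]
  have hw' : c w = w * tm c w := by rw [tm_apply, ← mul_div_assoc, mul_div_cancel_left]
  have h1 : c (v / w) = v / w := by
    rw [map_div, hv', hw', h, mul_div_mul_right_eq_div]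
  have h2 : v / w ∈ (tm c).range := div_mem hv hw
  have := abs_S1 htor h2 h1
  rwa [div_eq_one] at this

lemma abs_iter_mem {c : MulAut A} {v : A} (hv : v ∈ (tm c).range) (n : ℕ) :
    (fun w => tm c w)^[n] v ∈ (tm c).range := by
  induction n with
  | zero => exact hv
  | succ n ih => rw [Function.iterate_succ_apply']; exact ⟨_, rfl⟩

lemma abs_periodic [Finite A] {c : MulAut A} (htor : NTor c) {v : A}
    (hv : v ∈ (tm c).range) : ∃ cyc : ℕ, 0 < cyc ∧ (fun w => tm c w)^[cyc] v = v := by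
  set F : A → A := fun w => tm c w with hF
  obtain ⟨n, n', hne, heq⟩ := Finite.exists_ne_map_eq_of_infinite (fun n : ℕ => F^[n] v)
  wlog hlt : n < n' generalizing n n'
  · exact this n' n hne.symm heq.symm (by omega)
  obtain ⟨k, rfl⟩ : ∃ k, n' = n + k := ⟨n' - n, by omega⟩
  have hk : 0 < k := by omega
  refine ⟨k, hk, ?_⟩
  have hpeel : ∀ (i : ℕ) (a b : A), a ∈ (tm c).range → b ∈ (tm c).range →
      F^[i] a = F^[i] b → a = b := by
    intro i
    induction i with
    | zero => intro a b _ _ h; exact h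
    | succ i ih =>
      intro a b ha hb h
      rw [Function.iterate_succ_apply', Function.iterate_succ_apply'] at h
      exact ih a b ha hb (abs_inj htor (abs_iter_mem ha i) (abs_iter_mem hb i) h)
  have : F^[n] (F^[k] v) = F^[n] v := by
    rw [← Function.iterate_add_apply]
    exact heq.symm
  exact hpeel n _ v (abs_iter_mem hv k) hv this

lemma abs_shift {c : MulAut A} {v : A} {cyc : ℕ} (hcyc : (fun w => tm c w)^[cyc] v = v)
    (a M : ℕ) : (fun w => tm c w)^[a + cyc * M] v = (fun w => tm c w)^[a] v := by
  induction M with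
  | zero => simp
  | succ M ih =>
    have : a + cyc * (M + 1) = (a + cyc * M) + cyc := by ring
    rw [this, Function.iterate_add_apply, hcyc]
    exact ih

end abs

section lemC
variable {G : Type*} [Group G] [Finite G] {m : ℕ}

set_option maxHeartbeats 1000000 in
lemma order_le_of_prime_pow_action
    (h : ∀ g : G, ∃ R : Finset G, R.card ≤ m ∧ IsRightEngelSink g ↑R)
    (V : Subgroup G) [hVn : V.Normal]
    (hcomm : ∀ a b : ↥V, a * b = b * a)
    {p : ℕ} (hp : p.Prime) (hVp : IsPGroup p ↥V)
    {ℓ : ℕ} (hl : ℓ.Prime) (hlp : ℓ ≠ p)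
    (y : G) {a : ℕ} (ha : 0 < a)
    (hord : orderOf (MulAut.conjNormal y : MulAut ↥V) = ℓ ^ a) :
    ℓ ^ a ≤ m := by
  classical
  letI cg : CommGroup ↥V := { (inferInstance : Group ↥V) with mul_comm := hcomm }
  set d : ℕ := ℓ ^ a with hd
  have hd1 : 1 < d := by
    have := hl.one_lt
    calc 1 < ℓ := hl.one_lt
      _ = ℓ ^ 1 := (pow_one ℓ).symm
      _ ≤ ℓ ^ a := Nat.pow_le_pow_right (le_of_lt hl.one_lt) ha
  set σ : MulAut ↥V := (MulAut.conjNormal y : MulAut ↥V)⁻¹ with hσ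
  have hσd : orderOf σ = d := by rw [hσ, orderOf_inv, hord]
  -- torsion hypothesis for powers of σ
  have htor : ∀ j : ℕ, NTor (σ ^ j) := by
    intro j v hv
    have h1 : orderOf (σ ^ j) ∣ d := by
      apply orderOf_dvd_of_pow_eq_one
      rw [← pow_mul, mul_comm j d, pow_mul, ← hσd, pow_orderOf_eq_one, one_pow]
    have h2 : orderOf v ∣ d := (orderOf_dvd_of_pow_eq_one hv).trans h1
    obtain ⟨k, hk⟩ := hVp v
    have h4 : orderOf v ∣ p ^ k := orderOf_dvd_of_pow_eq_one hk
    have hcop : Nat.Coprime (ℓ ^ a) (p ^ k) :=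
      Nat.Coprime.pow a k ((Nat.coprime_primes hl hp).2 hlp)
    have : orderOf v = 1 := Nat.dvd_one.mp (hcop ▸ Nat.dvd_gcd (hd ▸ h2) h4)
    exact orderOf_eq_one_iff.mp this
  -- commutation inside V at the level of G
  have hGcomm : ∀ (x z : G), x ∈ V → z ∈ V → x * z = z * x := by
    intro x z hx hz
    exact congrArg Subtype.val (hcomm ⟨x, hx⟩ ⟨z, hz⟩)
  -- the key commutator computation
  have hcmtr : ∀ (z : G) (w : ↥V), cmtr (w : G) z = ((tm ((MulAut.conjNormal z : MulAut ↥V)⁻¹) w : ↥V) : G) := by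
    intro z w
    have h1 : ((tm ((MulAut.conjNormal z : MulAut ↥V)⁻¹) w : ↥V) : G)
        = (z⁻¹ * (w : G) * z) * (w : G)⁻¹ := by
      rw [tm_apply]
      rw [div_eq_mul_inv]
      push_cast
      rw [MulAut.conjNormal_inv_apply]
    rw [h1, cmtr]
    have hmem : z⁻¹ * (w : G) * z ∈ V := by
      have := hVn.conj_mem (w : G) w.2 z⁻¹
      simpa using this
    have hmem2 : ((w : G)⁻¹ : G) ∈ V := V.inv_mem w.2
    rw [← hGcomm _ _ hmem2 hmem]
    group
  -- trajectory identity
  have htraj : ∀ (j n : ℕ) (v : ↥V), engel (v : G) (y ^ j) n = (((fun w => tm (σ ^ j) w)^[n] v : ↥V) : G) := by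
    intro j n v
    have hcn : ((MulAut.conjNormal (y ^ j) : MulAut ↥V))⁻¹ = σ ^ j := by
      rw [hσ, inv_pow, ← map_pow]
    induction n with
    | zero => rfl
    | succ n ih =>
      show cmtr (engel (v : G) (y ^ j) n) (y ^ j) = _
      rw [ih, hcmtr (y ^ j), hcn, Function.iterate_succ_apply']
  -- σ^(ℓ^(a-1)) is not the identity
  have hepow : ℓ ^ (a - 1) < d := by
    rw [hd]
    exact Nat.pow_lt_pow_right hl.one_lt (by omega)
  have hne : σ ^ (ℓ ^ (a - 1)) ≠ 1 := by
    intro hcon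
    have h1 : d ∣ ℓ ^ (a - 1) := hσd ▸ orderOf_dvd_of_pow_eq_one hcon
    have h2 : d ≤ ℓ ^ (a - 1) := Nat.le_of_dvd (Nat.pow_pos hl.pos) h1
    omega
  -- choose the test element v
  obtain ⟨u₀, hu₀⟩ : ∃ u₀ : ↥V, (σ ^ (ℓ ^ (a - 1))) u₀ ≠ u₀ := by
    by_contra hcon
    push_neg at hcon
    exact hne (by ext u; simp [hcon u])
  set v : ↥V := tm (σ ^ (ℓ ^ (a - 1))) u₀ with hv
  have hv_ne : v ≠ 1 := by
    rw [hv, tm_apply, Ne, div_eq_one]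
    exact hu₀
  have hv_mem0 : v ∈ (tm (σ ^ (ℓ ^ (a - 1)))).range := ⟨u₀, rfl⟩
  -- v lies in the range of tm (σ^j) for every 1 ≤ j < d
  have hv_mem : ∀ j : ℕ, 1 ≤ j → j < d → v ∈ (tm (σ ^ j)).range := by
    intro j hj1 hjd
    -- gcd j d divides ℓ^(a-1)
    have hgcd_dvd : Nat.gcd j d ∣ ℓ ^ (a - 1) := by
      obtain ⟨c, hca, hgc⟩ := (Nat.dvd_prime_pow hl).1 (hd ▸ Nat.gcd_dvd_right j d)
      have hcne : c ≠ a := by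
        intro hcon
        have h1 : Nat.gcd j d ∣ j := Nat.gcd_dvd_left j d
        rw [hgc, hcon] at h1
        have := Nat.le_of_dvd (by omega) h1
        rw [hd] at hjd
        omega
      rw [hgc]
      exact pow_dvd_pow ℓ (by omega)
    -- Bezout: σ^(gcd j d) is a natural power of σ^j
    have hfo : IsOfFinOrder (σ ^ j) := by
      rw [isOfFinOrder_iff_pow_eq_one]
      refine ⟨d, by omega, ?_⟩
      rw [← pow_mul, mul_comm j d, pow_mul, ← hσd, pow_orderOf_eq_one, one_pow]
    have hbez : ∃ k : ℕ, (σ ^ j) ^ k = σ ^ Nat.gcd j d := by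
      have hσdz : σ ^ d = 1 := by rw [← hσd]; exact pow_orderOf_eq_one σ
      have hz : (σ ^ j) ^ (Nat.gcdA j d) = σ ^ (Nat.gcd j d : ℤ) := by
        rw [Nat.gcd_eq_gcd_ab j d, zpow_add, zpow_mul, zpow_mul, zpow_natCast, zpow_natCast,
          hσdz, one_zpow, mul_one]
      refine ⟨(Nat.gcdA j d % (orderOf (σ ^ j) : ℤ)).toNat, ?_⟩
      have hop : 0 < orderOf (σ ^ j) := hfo.orderOf_pos
      have h1 : ((Nat.gcdA j d % (orderOf (σ ^ j) : ℤ)).toNat : ℤ)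
          = Nat.gcdA j d % (orderOf (σ ^ j) : ℤ) := by
        apply Int.toNat_of_nonneg
        apply Int.emod_nonneg
        exact_mod_cast hop.ne'
      calc (σ ^ j) ^ (Nat.gcdA j d % (orderOf (σ ^ j) : ℤ)).toNat
          = (σ ^ j) ^ (((Nat.gcdA j d % (orderOf (σ ^ j) : ℤ)).toNat : ℤ)) := by
            rw [zpow_natCast]
        _ = (σ ^ j) ^ (Nat.gcdA j d % (orderOf (σ ^ j) : ℤ)) := by rw [h1]
        _ = (σ ^ j) ^ (Nat.gcdA j d) := zpow_mod_orderOf _ _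
        _ = σ ^ (Nat.gcd j d : ℤ) := hz
        _ = σ ^ Nat.gcd j d := zpow_natCast σ _
    obtain ⟨k, hk⟩ := hbez
    obtain ⟨e, he⟩ := hgcd_dvd
    have hpow : (σ ^ j) ^ (k * e) = σ ^ (ℓ ^ (a - 1)) := by
      rw [pow_mul, hk, ← pow_mul, ← he]
    apply abs_S3 (σ ^ j) (k * e)
    rw [hpow]
    exact hv_mem0
  -- no power of σ in (0,d) fixes v
  have hfix_ne : ∀ j : ℕ, 1 ≤ j → j < d → (σ ^ j) v ≠ v := by
    intro j hj1 hjd hcon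
    exact hv_ne (abs_S1 (htor j) (hv_mem j hj1 hjd) hcon)
  -- the sink of v
  obtain ⟨R, hRcard, hRsink⟩ := h (v : G)
  have hR1 : (1 : G) ∈ R := by
    have := one_mem_of_sink hRsink
    exact Finset.mem_coe.1 this
  have hRj : ∀ j : ℕ, 1 ≤ j → j < d → ((tm (σ ^ j) v : ↥V) : G) ∈ R := by
    intro j hj1 hjd
    obtain ⟨cyc, hcyc, hcyceq⟩ := abs_periodic (htor j) (hv_mem j hj1 hjd)
    obtain ⟨n₀, hn₀, hmem⟩ := hRsink.2 (y ^ j)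
    have h1 : engel (v : G) (y ^ j) (1 + cyc * n₀) ∈ ↑R := by
      apply hmem
      have : n₀ ≤ cyc * n₀ := Nat.le_mul_of_pos_left n₀ hcyc
      omega
    rw [htraj j (1 + cyc * n₀) v, abs_shift hcyceq 1 n₀] at h1
    simpa using Finset.mem_coe.1 h1
  -- the d distinct elements
  set f : ℕ → G := fun j => if j = 0 then 1 else ((tm (σ ^ j) v : ↥V) : G) with hf
  have hmapsto : ∀ j ∈ Finset.range d, f j ∈ R := by
    intro j hj
    rw [Finset.mem_range] at hj
    by_cases h0 : j = 0
    · simp [hf, h0, hR1]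
    · simp only [hf, if_neg h0]
      exact hRj j (by omega) hj
  have hinj : Set.InjOn f (Finset.range d) := by
    have key : ∀ j j' : ℕ, 1 ≤ j' → j' < j → j < d → f j = f j' → False := by
      intro j j' hj'1 hj'j hjd hcon
      have hj0 : j ≠ 0 := by omega
      have hj'0 : j' ≠ 0 := by omega
      rw [hf] at hcon
      simp only [if_neg hj0, if_neg hj'0] at hcon
      have h1 : tm (σ ^ j) v = tm (σ ^ j') v := Subtype.ext hcon
      rw [tm_apply, tm_apply] at h1
      have h2 : (σ ^ j) v = (σ ^ j') v := by
        have := div_left_injective (G := ↥V) (b := v) h1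
        exact this
      have h3 : (σ ^ j') ((σ ^ (j - j')) v) = (σ ^ j') v := by
        rw [← MulAut.mul_apply, ← pow_add]
        have : j' + (j - j') = j := by omega
        rw [this]
        exact h2
      have h4 : (σ ^ (j - j')) v = v := (σ ^ j').injective h3
      exact hfix_ne (j - j') (by omega) (by omega) h4
    intro j hj j' hj' hcon
    simp only [Finset.coe_range, Set.mem_Iio] at hj hj'
    rcases lt_trichotomy j j' with hlt | heq | hgt
    · by_cases h0 : j = 0
      · subst h0
        exfalso
        have hj'0 : j' ≠ 0 := by omega
        rw [hf] at hcon
        simp only [if_pos rfl, if_neg hj'0] at hcon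
        have h1 : tm (σ ^ j') v = 1 := by
          apply Subtype.ext
          exact hcon.symm
        rw [tm_apply, div_eq_one] at h1
        exact hfix_ne j' (by omega) hj' h1
      · exact False.elim (key j' j (by omega) hlt hj' hcon.symm)
    · exact heq
    · by_cases h0 : j' = 0
      · subst h0
        exfalso
        have hj0 : j ≠ 0 := by omega
        rw [hf] at hcon
        simp only [if_pos rfl, if_neg hj0] at hcon
        have h1 : tm (σ ^ j) v = 1 := by
          apply Subtype.ext
          exact hcon
        rw [tm_apply, div_eq_one] at h1
        exact hfix_ne j (by omega) hj h1
      · exact False.elim (key j j' (by omega) hgt hj hcon)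
  calc ℓ ^ a = d := hd.symm
    _ = (Finset.range d).card := (Finset.card_range d).symm
    _ = ((Finset.range d).image f).card := (Finset.card_image_of_injOn hinj).symm
    _ ≤ R.card := Finset.card_le_card (by
        intro x hx
        obtain ⟨j, hj, rfl⟩ := Finset.mem_image.1 hx
        exact hmapsto j hj)
    _ ≤ m := hRcard

end lemC

section minimal

lemma exists_minimal_normal (G : Type*) [Group G] [Finite G] [Nontrivial G] :
    ∃ V : Subgroup G, V.Normal ∧ V ≠ ⊥ ∧
      ∀ W : Subgroup G, W.Normal → W ≠ ⊥ → W ≤ V → W = V := by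
  classical
  set s : Set ℕ := {n | ∃ V : Subgroup G, V.Normal ∧ V ≠ ⊥ ∧ Nat.card ↥V = n} with hs
  have hsne : s.Nonempty := ⟨Nat.card ↥(⊤ : Subgroup G), ⊤, inferInstance, by
    intro hcon
    have : (1 : G) ≠ 1 → False := fun h => h rfl
    obtain ⟨g, hg⟩ := exists_ne (1 : G)
    have : g ∈ (⊥ : Subgroup G) := hcon ▸ Subgroup.mem_top g
    exact hg (Subgroup.mem_bot.1 this), rfl⟩
  obtain ⟨V, hVn, hVb, hVc⟩ : sInf s ∈ s := Nat.sInf_mem hsne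
  refine ⟨V, hVn, hVb, fun W hWn hWb hWV => ?_⟩
  have h1 : Nat.card ↥W ∈ s := ⟨W, hWn, hWb, rfl⟩
  have h2 : sInf s ≤ Nat.card ↥W := Nat.sInf_le h1
  exact Subgroup.eq_of_le_of_card_ge hWV (le_trans (le_of_eq hVc) h2)

lemma minimal_normal_abelian_pgroup {G : Type*} [Group G] [Finite G] [Group.IsSolvable G]
    (V : Subgroup G) (hVn : V.Normal) (hV : V ≠ ⊥)
    (hmin : ∀ W : Subgroup G, W.Normal → W ≠ ⊥ → W ≤ V → W = V) :
    (∀ a b : ↥V, a * b = b * a) ∧ ∃ p : ℕ, p.Prime ∧ IsPGroup p ↥V := by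
  classical
  haveI := hVn
  -- abelian
  have hKle : ⁅V, V⁆ ≤ V := by
    rw [Subgroup.commutator_le]
    intro g hg h hh
    exact V.mul_mem (V.mul_mem (V.mul_mem hg hh) (V.inv_mem hg)) (V.inv_mem hh)
  have hKnV : ⁅V, V⁆ ≠ V := by
    intro hcon
    have h2 : Subgroup.map V.subtype (⊤ : Subgroup ↥V) = V := by
      rw [← MonoidHom.range_eq_map, Subgroup.range_subtype]
    have h1 : Subgroup.map V.subtype ⁅(⊤ : Subgroup ↥V), ⊤⁆ = ⁅V, V⁆ := by
      rw [Subgroup.map_commutator, h2]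
    have h3 : ⁅(⊤ : Subgroup ↥V), ⊤⁆ = (⊤ : Subgroup ↥V) := by
      apply Subgroup.map_injective (V.subtype_injective)
      rw [h1, h2, hcon]
    -- solvability contradiction
    obtain ⟨n, hn⟩ := (inferInstance : Group.IsSolvable ↥V)
    have h4 : ∀ k, derivedSeries ↥V k = ⊤ := by
      intro k
      induction k with
      | zero => rfl
      | succ k ih => rw [derivedSeries_succ, ih, h3]
    rw [h4 n] at hn
    apply hV
    rw [eq_bot_iff]
    intro g hg
    have : (⟨g, hg⟩ : ↥V) ∈ (⊥ : Subgroup ↥V) := by rw [← hn]; trivial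
    have := Subgroup.mem_bot.1 this
    rw [Subgroup.mem_bot]
    exact congrArg Subtype.val this
  have hKbot : ⁅V, V⁆ = ⊥ := by
    by_contra hcon
    exact hKnV (hmin ⁅V, V⁆ inferInstance hcon hKle)
  have hcomm : ∀ a b : ↥V, a * b = b * a := by
    intro a b
    open scoped commutatorElement in have h1 : ⁅(a : G), (b : G)⁆ ∈ ⁅V, V⁆ := Subgroup.commutator_mem_commutator a.2 b.2
    rw [hKbot, Subgroup.mem_bot, commutatorElement_eq_one_iff_mul_comm] at h1
    exact Subtype.ext h1
  refine ⟨hcomm, ?_⟩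
  -- p-group
  have hVnt : Nontrivial ↥V := by
    rcases V.bot_or_nontrivial with h | h
    · exact absurd h hV
    · exact h
  have hcard1 : Nat.card ↥V ≠ 1 := by
    have := Finite.one_lt_card_iff_nontrivial.2 hVnt
    omega
  set p := (Nat.card ↥V).minFac with hpdef
  have hp : p.Prime := Nat.minFac_prime hcard1
  haveI : Fact p.Prime := ⟨hp⟩
  have hpdvd : p ∣ Nat.card ↥V := Nat.minFac_dvd _
  obtain ⟨v, hv⟩ := exists_prime_orderOf_dvd_card' (G := ↥V) p hpdvd
  set W : Subgroup G := {
    carrier := {g : G | g ∈ V ∧ g ^ p = 1}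
    one_mem' := ⟨V.one_mem, one_pow p⟩
    mul_mem' := by
      rintro x z ⟨hx, hxp⟩ ⟨hz, hzp⟩
      refine ⟨V.mul_mem hx hz, ?_⟩
      have hcxz : Commute x z := by
        have := hcomm ⟨x, hx⟩ ⟨z, hz⟩
        exact congrArg Subtype.val this
      rw [hcxz.mul_pow, hxp, hzp, one_mul]
    inv_mem' := by
      rintro x ⟨hx, hxp⟩
      exact ⟨V.inv_mem hx, by rw [inv_pow, hxp, inv_one]⟩ } with hWdef
  have hWn : W.Normal := by
    constructor
    rintro x ⟨hx, hxp⟩ g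
    refine ⟨hVn.conj_mem x hx g, ?_⟩
    rw [conj_pow, hxp, mul_one, mul_inv_cancel]
  have hWb : W ≠ ⊥ := by
    intro hcon
    have h1 : ((v : G) ∈ W) := ⟨v.2, by
      have : v ^ p = 1 := by rw [← hv]; exact pow_orderOf_eq_one v
      have := congrArg Subtype.val this
      simpa using this⟩
    rw [hcon, Subgroup.mem_bot] at h1
    have : v = 1 := Subtype.ext h1
    rw [this, orderOf_one] at hv
    exact hp.one_lt.ne' hv.symm
  have hWle : W ≤ V := fun g hg => hg.1
  have hWV : W = V := hmin W hWn hWb hWle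
  refine ⟨p, hp, fun w => ⟨1, ?_⟩⟩
  have h1 : (w : G) ∈ W := hWV.symm ▸ w.2
  have h2 : (w : G) ^ p = 1 := h1.2
  rw [pow_one]
  apply Subtype.ext
  simpa using h2

end minimal

universe u

set_option maxHeartbeats 1600000 in
lemma main_aux (m : ℕ) : ∀ (n : ℕ) (G : Type u) (instG : Group G) (instF : Finite G)
    (instS : Group.IsSolvable G), Nat.card G = n →
    (∀ g : G, ∃ R : Finset G, R.card ≤ m ∧ IsRightEngelSink g ↑R) →
    ∃ N : Subgroup G, N.Normal ∧ Group.IsNilpotent ↥N ∧ ∀ x : G, x ^ m.factorial ∈ N := by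
  intro n
  induction n using Nat.strong_induction_on with
  | _ n ih =>
  intro G instG instF instS hcard hhyp
  rcases subsingleton_or_nontrivial G with hss | hnt
  · refine ⟨⊥, inferInstance, inferInstance, fun x => ?_⟩
    have : x ^ m.factorial = 1 := Subsingleton.elim _ _
    rw [this]; exact (⊥ : Subgroup G).one_mem
  · obtain ⟨V, hVn, hVbot, hVmin⟩ := exists_minimal_normal G
    haveI := hVn
    obtain ⟨hcomm, p, hp, hVp⟩ := minimal_normal_abelian_pgroup V hVn hVbot hVmin
    haveI : Fact p.Prime := ⟨hp⟩
    have hVnt : Nontrivial ↥V := by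
      rcases V.bot_or_nontrivial with h | h
      · exact absurd h hVbot
      · exact h
    -- induction hypothesis applied to the quotient
    have hlt : Nat.card (G ⧸ V) < n := by
      have h1 := Subgroup.card_eq_card_quotient_mul_card_subgroup V
      have h2 : 1 < Nat.card ↥V := Finite.one_lt_card_iff_nontrivial.2 hVnt
      have h3 : 0 < Nat.card (G ⧸ V) := Nat.card_pos
      calc Nat.card (G ⧸ V) < Nat.card (G ⧸ V) * Nat.card ↥V := by
            exact lt_mul_of_one_lt_right h3 h2
        _ = Nat.card G := h1.symm
        _ = n := hcard
    obtain ⟨NQ, hNQn, hNQnil, hNQpow⟩ := ih _ hlt (G ⧸ V) inferInstance inferInstance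
      inferInstance rfl (sink_hyp_quotient m hhyp V)
    haveI := hNQn
    set P : Subgroup G := NQ.comap (QuotientGroup.mk' V) with hP
    haveI hPn : P.Normal := hNQn.comap _
    have hVP : V ≤ P := by
      intro v hv
      rw [hP, Subgroup.mem_comap]
      have : (QuotientGroup.mk' V) v = 1 := (QuotientGroup.eq_one_iff v).2 hv
      rw [this]; exact NQ.one_mem
    have hPpow : ∀ x : G, x ^ m.factorial ∈ P := by
      intro x
      rw [hP, Subgroup.mem_comap, map_pow]
      exact hNQpow _
    -- the conjugation action on V and its kernel
    set ψ : G →* MulAut ↥V := MulAut.conjNormal with hψ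
    set C : Subgroup G := ψ.ker with hC
    haveI hCn : C.Normal := MonoidHom.normal_ker ψ
    have hVC : V ≤ C := by
      intro v hv
      rw [hC, MonoidHom.mem_ker]
      ext w
      show ((ψ v) w : G) = (w : G)
      rw [hψ]
      rw [MulAut.conjNormal_apply]
      have := congrArg Subtype.val (hcomm ⟨v, hv⟩ w)
      simp only [Subgroup.coe_mul] at this
      rw [this]; group
    have hCmem : ∀ z : G, z ∈ C → ∀ w : ↥V, z * w * z⁻¹ = w := by
      intro z hz w
      rw [hC, MonoidHom.mem_ker] at hz
      have := congrArg (fun e : MulAut ↥V => (e w : G)) hz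
      simpa [hψ, MulAut.conjNormal_apply] using this
    -- the key step: m!-th powers centralize V
    have hCENT : ∀ x : G, x ^ m.factorial ∈ C := by
      classical
      set K := m.factorial with hK
      have hKne : K ≠ 0 := Nat.factorial_ne_zero m
      set ψb : (G ⧸ C) →* MulAut ↥V := QuotientGroup.kerLift ψ with hψb
      have hψb_inj : Function.Injective ψb := QuotientGroup.kerLift_injective ψ
      have hψb_mk : ∀ g : G, ψb (QuotientGroup.mk g) = ψ g := fun g => QuotientGroup.kerLift_mk ψ g
      set φ : (G ⧸ V) →* (G ⧸ C) := QuotientGroup.map V C (MonoidHom.id G)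
        (by intro v hv; exact hVC hv) with hφ
      have hφ_mk : ∀ g : G, φ (QuotientGroup.mk g) = QuotientGroup.mk g := fun g =>
        QuotientGroup.map_mk V C (MonoidHom.id G) _ g
      have hφ_surj : Function.Surjective φ := by
        intro t
        obtain ⟨g, rfl⟩ := QuotientGroup.mk_surjective t
        exact ⟨QuotientGroup.mk g, hφ_mk g⟩
      set Pbar : Subgroup (G ⧸ C) := NQ.map φ with hPbar
      haveI hPbarn : Pbar.Normal := hNQn.map φ hφ_surj
      have hPbarnil : Group.IsNilpotent ↥Pbar := by
        have h1 : (φ.comp NQ.subtype).range = Pbar := by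
          rw [MonoidHom.range_comp, Subgroup.range_subtype]
        have h2 : Group.IsNilpotent ↥(φ.comp NQ.subtype).range :=
          nilpotent_of_surjective (φ.comp NQ.subtype).rangeRestrict
            (MonoidHom.rangeRestrict_surjective _)
        exact h1 ▸ h2
      have hppb : ∀ (z : G ⧸ C) (ℓ e : ℕ), ℓ.Prime → ℓ ≠ p → 0 < e → orderOf z = ℓ ^ e →
          ℓ ^ e ≤ m := by
        intro z ℓ e hl hlp he hz
        obtain ⟨y, rfl⟩ := QuotientGroup.mk_surjective z
        have hordy : orderOf (MulAut.conjNormal y : MulAut ↥V) = ℓ ^ e := by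
          have h1 : orderOf (ψb (QuotientGroup.mk y)) =
              orderOf (QuotientGroup.mk y : G ⧸ C) := orderOf_injective ψb hψb_inj _
          rw [hψb_mk] at h1
          rw [← hz, ← h1, hψ]
        exact order_le_of_prime_pow_action hhyp V hcomm hp hVp hl hlp y he hordy
      intro x
      set xb : G ⧸ C := QuotientGroup.mk x with hxb
      have hmkpow : (QuotientGroup.mk (x ^ K) : G ⧸ C) = xb ^ K := by
        rw [hxb]
        exact map_pow (QuotientGroup.mk' C) x K
      suffices hsuff : xb ^ K = 1 by
        have h1 : (QuotientGroup.mk (x ^ K) : G ⧸ C) = 1 := by rw [hmkpow, hsuff]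
        exact (QuotientGroup.eq_one_iff _).1 h1
      set n0 := orderOf xb with hn0def
      have hn0 : n0 ≠ 0 := by
        have : 0 < orderOf xb := orderOf_pos xb
        omega
      set b := n0.factorization p with hbdef
      set q := n0 / p ^ b with hqdef
      have hfact : p ^ b * q = n0 := Nat.ordProj_mul_ordCompl_eq_self n0 p
      have hq0 : q ≠ 0 := by
        intro hcon
        rw [hcon, mul_zero] at hfact
        omega
      have hqK : q ∣ K := by
        rw [← Nat.factorization_le_iff_dvd hq0 hKne]
        rw [Finsupp.le_iff]
        intro ℓ hℓsupp
        have hlprime : ℓ.Prime := Nat.prime_of_mem_primeFactors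
          (by rwa [← Nat.support_factorization])
        have he' : 0 < q.factorization ℓ := by
          have := Finsupp.mem_support_iff.1 hℓsupp
          omega
        have hlq : ℓ ∣ q := Nat.dvd_of_factorization_pos he'.ne'
        have hlnp : ℓ ≠ p := by
          rintro rfl
          exact (Nat.not_dvd_ordCompl hp hn0) hlq
        have hvq : q.factorization ℓ = n0.factorization ℓ := by
          rw [hqdef, Nat.factorization_ordCompl n0 p, Finsupp.erase_ne hlnp]
        set e := q.factorization ℓ with hedef
        set z := xb ^ (n0 / ℓ ^ e) with hzdef
        have hedvd : ℓ ^ e ∣ n0 := by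
          rw [hvq]
          exact Nat.ordProj_dvd n0 ℓ
        have hddvd : n0 / ℓ ^ e ∣ n0 := by
          rw [hvq]
          exact Nat.ordCompl_dvd n0 ℓ
        have hordz : orderOf z = ℓ ^ e := by
          rw [hzdef, orderOf_pow, ← hn0def, Nat.gcd_eq_right hddvd]
          exact Nat.div_div_self hedvd hn0
        have hle := hppb z ℓ e hlprime hlnp he' hordz
        have hdvdK : ℓ ^ e ∣ K := Nat.dvd_factorial (pow_pos hlprime.pos e) hle
        exact (Nat.Prime.pow_dvd_iff_le_factorization hlprime hKne).1 hdvdK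
      -- xb ^ K is a p-element of Pbar
      have hwp : (xb ^ K) ^ (p ^ b) = 1 := by
        rw [← pow_mul]
        apply orderOf_dvd_iff_pow_eq_one.1
        rw [← hn0def, ← hfact]
        calc p ^ b * q ∣ p ^ b * K := mul_dvd_mul_left _ hqK
          _ = K * p ^ b := mul_comm _ _
      have hwPbar : xb ^ K ∈ Pbar := by
        refine Subgroup.mem_map.2 ⟨(QuotientGroup.mk (x ^ K) : G ⧸ V), ?_, ?_⟩
        · have h1 := hPpow x
          rwa [hP, Subgroup.mem_comap] at h1
        · rw [hφ_mk]
          exact hmkpow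
      set Sgen : Set (G ⧸ C) := {z | z ∈ Pbar ∧ ∃ k : ℕ, z ^ p ^ k = 1} with hSgen
      set Obar : Subgroup (G ⧸ C) := Subgroup.closure Sgen with hObar
      have hSgen_conj : ∀ (g : G ⧸ C), ∀ z ∈ Sgen, g * z * g⁻¹ ∈ Sgen := by
        rintro g z ⟨hzP, k, hk⟩
        refine ⟨hPbarn.conj_mem z hzP g, k, ?_⟩
        rw [conj_pow, hk, mul_one, mul_inv_cancel]
      have hOn : Obar.Normal := by
        constructor
        intro h hh g
        induction hh using Subgroup.closure_induction with
        | mem z hz => exact Subgroup.subset_closure (hSgen_conj g z hz)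
        | one => simpa using Obar.one_mem
        | mul z w _ _ hz hw =>
          have : g * (z * w) * g⁻¹ = (g * z * g⁻¹) * (g * w * g⁻¹) := by group
          rw [this]
          exact Obar.mul_mem hz hw
        | inv z _ hz =>
          have : g * z⁻¹ * g⁻¹ = (g * z * g⁻¹)⁻¹ := by group
          rw [this]
          exact Obar.inv_mem hz
      have hwO : xb ^ K ∈ Obar := Subgroup.subset_closure ⟨hwPbar, b, hwp⟩
      -- Obar is a p-group
      have hOp : IsPGroup p ↥Obar := by
        obtain ⟨S⟩ : Nonempty (Sylow p ↥Pbar) := inferInstance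
        have htfae : Group.IsNilpotent ↥Pbar ↔
            ∀ (p' : ℕ) (_hp : Fact p'.Prime) (P' : Sylow p' ↥Pbar), (↑P' : Subgroup ↥Pbar).Normal :=
          (isNilpotent_of_finite_tfae (G := ↥Pbar)).out 0 3 rfl rfl
        have hSn : (↑S : Subgroup ↥Pbar).Normal := htfae.mp hPbarnil p ⟨hp⟩ S
        haveI hU := Sylow.unique_of_normal S hSn
        have hmemS : ∀ (z : ↥Pbar) (k : ℕ), z ^ p ^ k = 1 → z ∈ (↑S : Subgroup ↥Pbar) := by
          intro z k hk
          have hpg : IsPGroup p ↥(Subgroup.zpowers z) := by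
            intro w
            refine ⟨k, ?_⟩
            obtain ⟨i, hi⟩ := Subgroup.mem_zpowers_iff.1 w.2
            apply Subtype.ext
            show ((w : ↥Pbar) ^ (p ^ k) : ↥Pbar) = 1
            rw [← hi, ← zpow_natCast, ← zpow_mul, mul_comm, zpow_mul, zpow_natCast, hk, one_zpow]
          obtain ⟨Q, hQ⟩ := hpg.exists_le_sylow
          have hQS : Q = S := Subsingleton.elim Q S
          exact hQS ▸ hQ (Subgroup.mem_zpowers z)
        have hle : Obar ≤ (↑S : Subgroup ↥Pbar).map Pbar.subtype := by
          rw [hObar]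
          apply (Subgroup.closure_le _).2
          rintro z ⟨hzP, k, hk⟩
          exact Subgroup.mem_map.2
            ⟨⟨z, hzP⟩, hmemS ⟨z, hzP⟩ k (Subtype.ext (by simpa using hk)), rfl⟩
        exact IsPGroup.to_le (S.isPGroup'.map Pbar.subtype) hle
      -- action of Obar on V and its fixed points
      letI actO : MulAction ↥Obar ↥V := MulAction.compHom _ (ψb.comp Obar.subtype)
      have hsmul : ∀ (z : ↥Obar) (w : ↥V), z • w = ψb ↑z w := fun _ _ => rfl
      have hmod := hOp.card_modEq_card_fixedPoints ↥V
      have hpV : p ∣ Nat.card ↥V := by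
        obtain ⟨k, hk, hcardV⟩ := (IsPGroup.nontrivial_iff_card hVp).1 hVnt
        rw [hcardV]
        exact dvd_pow_self p hk.ne'
      have hfix_dvd : p ∣ Nat.card ↥(MulAction.fixedPoints ↥Obar ↥V) := by
        have h0 : Nat.card ↥V ≡ 0 [MOD p] := (Nat.modEq_zero_iff_dvd).2 hpV
        exact (Nat.modEq_zero_iff_dvd).1 (hmod.symm.trans h0)
      have hfix_one : (1 : ↥V) ∈ MulAction.fixedPoints ↥Obar ↥V := by
        intro z
        rw [hsmul]
        exact map_one _
      haveI : Nonempty ↥(MulAction.fixedPoints ↥Obar ↥V) := ⟨⟨1, hfix_one⟩⟩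
      have hfix_pos : 0 < Nat.card ↥(MulAction.fixedPoints ↥Obar ↥V) := Nat.card_pos
      have hfix_two : 1 < Nat.card ↥(MulAction.fixedPoints ↥Obar ↥V) := by
        have := Nat.le_of_dvd hfix_pos hfix_dvd
        have := hp.two_le
        omega
      haveI hfixnt : Nontrivial ↥(MulAction.fixedPoints ↥Obar ↥V) :=
        Finite.one_lt_card_iff_nontrivial.1 hfix_two
      obtain ⟨v₀, hv₀fix, hv₀ne⟩ : ∃ v₀ : ↥V,
          v₀ ∈ MulAction.fixedPoints ↥Obar ↥V ∧ v₀ ≠ 1 := by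
        obtain ⟨a₁, a₂, hne⟩ := hfixnt
        by_cases h1 : (a₁ : ↥V) = 1
        · refine ⟨a₂, a₂.2, fun hcon => hne (Subtype.ext ?_)⟩
          rw [h1, hcon]
        · exact ⟨a₁, a₁.2, h1⟩
      set Fx : Subgroup ↥V := {
        carrier := MulAction.fixedPoints ↥Obar ↥V
        one_mem' := hfix_one
        mul_mem' := by
          intro x1 y1 hx1 hy1
          intro z
          have h1 := hx1 z
          have h2 := hy1 z
          rw [hsmul] at h1 h2 ⊢
          rw [map_mul, h1, h2]
        inv_mem' := by
          intro x1 hx1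
          intro z
          have h1 := hx1 z
          rw [hsmul] at h1 ⊢
          rw [map_inv, h1] } with hFx
      set Vfix : Subgroup G := Fx.map V.subtype with hVfixdef
      have hVfixle : Vfix ≤ V := by
        rw [hVfixdef]
        exact Subgroup.map_subtype_le Fx
      have hVfixne : Vfix ≠ ⊥ := by
        intro hcon
        have h1 : (v₀ : G) ∈ Vfix := Subgroup.mem_map.2 ⟨v₀, hv₀fix, rfl⟩
        rw [hcon, Subgroup.mem_bot] at h1
        exact hv₀ne (Subtype.ext h1)
      have hconjcalc : ∀ (g : G) (u' : ↥V),
          ψb (QuotientGroup.mk g) u' = ⟨g * u' * g⁻¹, hVn.conj_mem _ u'.2 g⟩ := by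
        intro g u'
        rw [hψb_mk, hψ]
        apply Subtype.ext
        rw [MulAut.conjNormal_apply]
      have hVfixn : Vfix.Normal := by
        constructor
        intro u hu g
        obtain ⟨w, hw, rfl⟩ := Subgroup.mem_map.1 hu
        refine Subgroup.mem_map.2 ⟨⟨g * w * g⁻¹, hVn.conj_mem _ w.2 g⟩, ?_, rfl⟩
        intro z
        rw [hsmul]
        set gb : G ⧸ C := QuotientGroup.mk g with hgb
        have hz' : gb⁻¹ * ↑z * gb ∈ Obar := by
          have h1 := hOn.conj_mem (↑z : G ⧸ C) z.2 gb⁻¹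
          simpa using h1
        have hfix' : ψb (gb⁻¹ * ↑z * gb) w = w := by
          have h1 := hw ⟨_, hz'⟩
          rw [hsmul] at h1
          exact h1
        calc ψb ↑z ⟨g * ↑w * g⁻¹, hVn.conj_mem _ w.2 g⟩
            = ψb ↑z (ψb gb w) := by rw [hgb, hconjcalc g w]
          _ = ψb (↑z * gb) w := by rw [map_mul]; rfl
          _ = ψb (gb * (gb⁻¹ * ↑z * gb)) w := by
              have : (↑z : G ⧸ C) * gb = gb * (gb⁻¹ * ↑z * gb) := by group
              rw [this]
          _ = ψb gb (ψb (gb⁻¹ * ↑z * gb) w) := by rw [map_mul]; rfl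
          _ = ψb gb w := by rw [hfix']
          _ = ⟨g * ↑w * g⁻¹, hVn.conj_mem _ w.2 g⟩ := by rw [hgb, hconjcalc g w]
      have hVfixV : Vfix = V := hVmin Vfix hVfixn hVfixne hVfixle
      have hfixall : ∀ (z : ↥Obar) (w : ↥V), ψb ↑z w = w := by
        intro z w
        have hwV : (w : G) ∈ Vfix := by
          rw [hVfixV]
          exact w.2
        obtain ⟨w', hw', hww⟩ := Subgroup.mem_map.1 hwV
        have hww' : w' = w := Subtype.ext hww
        rw [← hww']
        have h1 := hw' z
        rw [hsmul] at h1
        exact h1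
      have hz1 : ψb (xb ^ K) = 1 := by
        ext w
        have := hfixall ⟨xb ^ K, hwO⟩ w
        simpa using congrArg Subtype.val this
      apply hψb_inj
      rw [hz1, map_one]
    -- assemble
    refine ⟨P ⊓ C, ?_, ?_, fun x => ⟨hPpow x, hCENT x⟩⟩
    · constructor
      intro x hx g
      exact ⟨hPn.conj_mem x hx.1 g, hCn.conj_mem x hx.2 g⟩
    · -- nilpotency of P ⊓ C
      have hmemNQ : ∀ x : ↥(P ⊓ C), ((QuotientGroup.mk' V).comp (P ⊓ C).subtype) x ∈ NQ :=
        fun x => Subgroup.mem_comap.1 x.2.1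
      set f : ↥(P ⊓ C) →* ↥NQ :=
        ((QuotientGroup.mk' V).comp (P ⊓ C).subtype).codRestrict NQ hmemNQ with hf
      apply @isNilpotent_of_ker_le_center _ _ _ _ f ?_ hNQnil
      intro x hx
      rw [MonoidHom.mem_ker] at hx
      have hxV : (x : G) ∈ V := by
        have h1 : ((QuotientGroup.mk' V).comp (P ⊓ C).subtype) x = 1 := by
          have := congrArg Subtype.val hx
          simpa [hf] using this
        exact (QuotientGroup.eq_one_iff _).1 h1
      rw [Subgroup.mem_center_iff]
      intro z
      have hzC : (z : G) ∈ C := z.2.2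
      have h3 : (z : G) * (x : G) * (z : G)⁻¹ = (x : G) := by
        have h2 := hCmem (z : G) hzC ⟨(x : G), hxV⟩
        simpa using h2
      apply Subtype.ext
      show (z : G) * (x : G) = (x : G) * (z : G)
      rw [mul_inv_eq_iff_eq_mul] at h3
      exact h3

theorem solvable_exponent_divides_factorial {G : Type*} [Group G] [Finite G]
    [Group.IsSolvable G] (m : ℕ)
    (h : ∀ g : G, ∃ R : Finset G, R.card ≤ m ∧ IsRightEngelSink g ↑R) :
    ∃ N : Subgroup G, N.Normal ∧ Group.IsNilpotent N ∧
      ∀ [N.Normal], Monoid.exponent (G ⧸ N) ∣ Nat.factorial m := by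
  obtain ⟨N, hNn, hNnil, hNpow⟩ :=
    main_aux m (Nat.card G) G inferInstance inferInstance inferInstance rfl h
  refine ⟨N, hNn, hNnil, ?_⟩
  intro hn2
  apply Monoid.exponent_dvd_of_forall_pow_eq_one
  intro q
  obtain ⟨x, rfl⟩ := QuotientGroup.mk_surjective q
  have h1 : ((QuotientGroup.mk x : G ⧸ N)) ^ (Nat.factorial m)
      = (QuotientGroup.mk (x ^ Nat.factorial m) : G ⧸ N) :=
    (map_pow (QuotientGroup.mk' N) x (Nat.factorial m)).symm
  rw [h1]
  exact (QuotientGroup.eq_one_iff _).2 (hNpow x)
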